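/- Let n₁, n₂ ≥ 3 be integers, let u₁, v₁ ∈ C^{n₁}([a,b]) with dim P^{n₁}_{u₁,v₁}([a,b]) = n₁, and let u₂, v₂ ∈ C^{n₂}([c,d]) with dim P^{n₂}_{u₂,v₂}([c,d]) = n₂, and assume both univariate spaces satisfy conditions (C1) and (C2). Let R = [a,b] × [c,d] and let f : R → ℝ be such that all mixed partial derivatives D_s^i D_t^j f with 0 ≤ i ≤ n₁ and 0 ≤ j ≤ n₂ exist and are continuous on R. Then for every (s₀, t₀) ∈ (a,b) × (c,d) there exists a unique function Q in the tensor-product space P^{(n₁,n₂)}_{u,v}(R) such that D_s^i D_t^j Q(s₀, t₀) = D_s^i D_t^j f(s₀, t₀) for all 0 ≤ i ≤ n₁ − 1 and 0 ≤ j ≤ n₂ − 1. -/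

import Mathlib

open Set

noncomputable section

/-- Iterated derivative within the interval `[a, b]`. -/
def dW (a b : ℝ) (k : ℕ) (f : ℝ → ℝ) : ℝ → ℝ :=
  iteratedDerivWithin k f (Set.Icc a b)

/-- Generating set `{1, s, ..., s^(n-3), u, v}` of the space `P^n_{u,v}`. -/
def genSet (n : ℕ) (u v : ℝ → ℝ) : Set (ℝ → ℝ) :=
  insert u (insert v {f : ℝ → ℝ | ∃ i : ℕ, i + 3 ≤ n ∧ f = fun s : ℝ => s ^ i})

/-- The space `P^n_{u,v}` as a subspace of `ℝ → ℝ`. -/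
def Pspace (n : ℕ) (u v : ℝ → ℝ) : Submodule ℝ (ℝ → ℝ) :=
  Submodule.span ℝ (genSet n u v)

/-- Restriction of functions to `[a, b]`, as a linear map. -/
def restrictMap (a b : ℝ) : (ℝ → ℝ) →ₗ[ℝ] (Set.Icc a b → ℝ) :=
  LinearMap.funLeft ℝ ℝ Subtype.val

/-- The dimension of `P^n_{u,v}([a,b])`, i.e. of the space of restrictions to `[a,b]`. -/
def dimP (n : ℕ) (u v : ℝ → ℝ) (a b : ℝ) : ℕ :=
  Module.finrank ℝ ((Pspace n u v).map (restrictMap a b))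

/-- Condition (C1): if the `(n-2)`-th derivative of an element of `P^n_{u,v}([a,b])`
vanishes at two distinct points of `[a,b]`, it vanishes identically on `[a,b]`. -/
def CondC1 (n : ℕ) (u v : ℝ → ℝ) (a b : ℝ) : Prop :=
  ∀ ψ ∈ Pspace n u v, ∀ s₁ ∈ Set.Icc a b, ∀ s₂ ∈ Set.Icc a b, s₁ ≠ s₂ →
    dW a b (n - 2) ψ s₁ = 0 → dW a b (n - 2) ψ s₂ = 0 →
      ∀ s ∈ Set.Icc a b, dW a b (n - 2) ψ s = 0

/-- Condition (C2): if the `(n-2)`-th and `(n-1)`-th derivatives of an element of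
`P^n_{u,v}([a,b])` vanish at a common interior point, the `(n-2)`-th derivative
vanishes identically on `[a,b]`. -/
def CondC2 (n : ℕ) (u v : ℝ → ℝ) (a b : ℝ) : Prop :=
  ∀ ψ ∈ Pspace n u v, ∀ s₁ ∈ Set.Ioo a b,
    dW a b (n - 2) ψ s₁ = 0 → dW a b (n - 1) ψ s₁ = 0 →
      ∀ s ∈ Set.Icc a b, dW a b (n - 2) ψ s = 0

/-- The mixed partial derivative `D_s^i D_t^j f` taken within the rectangle
`[a,b] × [c,d]` (first `j` derivatives in `t` within `[c,d]`, then `i` derivatives in `s`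
within `[a,b]`). -/
def DmixW (a b c d : ℝ) (i j : ℕ) (f : ℝ → ℝ → ℝ) (s t : ℝ) : ℝ :=
  iteratedDerivWithin i (fun x => iteratedDerivWithin j (f x) (Set.Icc c d) t)
    (Set.Icc a b) s

/-- The tensor-product space `P^{(n₁,n₂)}_{u,v}(R)` spanned by products
`g₁(s) g₂(t)` with `g₁ ∈ P^{n₁}_{u₁,v₁}([a,b])` and `g₂ ∈ P^{n₂}_{u₂,v₂}([c,d])`. -/
def TPspace (n₁ n₂ : ℕ) (u₁ v₁ u₂ v₂ : ℝ → ℝ) : Submodule ℝ (ℝ → ℝ → ℝ) :=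
  Submodule.span ℝ {F : ℝ → ℝ → ℝ | ∃ g₁ ∈ Pspace n₁ u₁ v₁, ∃ g₂ ∈ Pspace n₂ u₂ v₂,
    F = fun s t => g₁ s * g₂ t}

lemma Pspace_contDiffOn {n : ℕ} {u v : ℝ → ℝ} {a b : ℝ}
    (hu : ContDiffOn ℝ n u (Set.Icc a b)) (hv : ContDiffOn ℝ n v (Set.Icc a b))
    {ψ : ℝ → ℝ} (hψ : ψ ∈ Pspace n u v) : ContDiffOn ℝ n ψ (Set.Icc a b) := by
  induction hψ using Submodule.span_induction with
  | mem x hx =>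
    rcases hx with rfl | rfl | ⟨i, hi, rfl⟩
    · exact hu
    · exact hv
    · exact (contDiff_id.pow i).contDiffOn
  | zero => exact contDiffOn_const
  | add x y hx hy ihx ihy => exact ihx.add ihy
  | smul c x hx ihx => exact ihx.const_smul c

-- finite sum rule for iteratedDerivWithin

lemma iterDW_finsum {ι : Type*} (S : Finset ι) (F : ι → ℝ → ℝ) {n k : ℕ} (hk : k ≤ n)
    {a b : ℝ} (hab : a < b) (hF : ∀ p ∈ S, ContDiffOn ℝ n (F p) (Set.Icc a b))
    {x : ℝ} (hx : x ∈ Set.Icc a b) :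
    iteratedDerivWithin k (fun s => ∑ p ∈ S, F p s) (Set.Icc a b) x
      = ∑ p ∈ S, iteratedDerivWithin k (F p) (Set.Icc a b) x := by
  classical
  have hU := uniqueDiffOn_Icc hab
  induction S using Finset.induction_on with
  | empty =>
    simp only [Finset.sum_empty]
    have h0 := iteratedDerivWithin_const_smul (f := fun _ : ℝ => (0:ℝ)) (n := k)
      hx hU (0:ℝ) (contDiffWithinAt_const (c := (0:ℝ)))
    simpa using h0
  | insert p S' hnotmem ih =>
    have h1 : ContDiffOn ℝ k (F p) (Set.Icc a b) :=
      (hF p (Finset.mem_insert_self p S')).of_le (by exact_mod_cast hk)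
    have h2 : ContDiffOn ℝ k (fun s => ∑ q ∈ S', F q s) (Set.Icc a b) :=
      ContDiffOn.sum fun q hq => ((hF q (Finset.mem_insert_of_mem hq)).of_le (by exact_mod_cast hk))
    have hadd := iteratedDerivWithin_add (f := F p) (g := fun s => ∑ q ∈ S', F q s)
      hx hU (h1.contDiffWithinAt hx) (h2.contDiffWithinAt hx)
    have : (fun s => ∑ q ∈ insert p S', F q s)
        = (F p + fun s => ∑ q ∈ S', F q s) := by
      funext s; simp [Finset.sum_insert hnotmem]
    rw [this, hadd, ih (fun q hq => hF q (Finset.mem_insert_of_mem hq))]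
    simp [Finset.sum_insert hnotmem]

lemma Pspace_vanish {n : ℕ} {u v : ℝ → ℝ} {a b : ℝ} (hn : 3 ≤ n) (hab : a < b)
    (hu : ContDiffOn ℝ n u (Set.Icc a b)) (hv : ContDiffOn ℝ n v (Set.Icc a b))
    (hC2 : CondC2 n u v a b) {ψ : ℝ → ℝ} (hψ : ψ ∈ Pspace n u v)
    {s₀ : ℝ} (hs₀ : s₀ ∈ Set.Ioo a b)
    (h0 : ∀ k < n, dW a b k ψ s₀ = 0) : ∀ s ∈ Set.Icc a b, ψ s = 0 := by
  have hsmooth : ContDiffOn ℝ n ψ (Set.Icc a b) := Pspace_contDiffOn hu hv hψ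
  have hU := uniqueDiffOn_Icc hab
  have hs₀' : s₀ ∈ Set.Icc a b := Set.Ioo_subset_Icc_self hs₀
  have h2 : ∀ s ∈ Set.Icc a b, dW a b (n-2) ψ s = 0 :=
    hC2 ψ hψ s₀ hs₀ (h0 _ (by omega)) (h0 _ (by omega))
  have key : ∀ j, j ≤ n-2 → ∀ s ∈ Set.Icc a b, dW a b (n-2-j) ψ s = 0 := by
    intro j
    induction j with
    | zero => simpa using h2
    | succ j ih =>
      intro hj s hs
      have hmem := ih (by omega)
      set m := n - 2 - (j+1) with hmdef
      have hm1 : m + 1 = n - 2 - j := by omega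
      have hdiff : DifferentiableOn ℝ (dW a b m ψ) (Set.Icc a b) :=
        hsmooth.differentiableOn_iteratedDerivWithin (by exact_mod_cast (by omega : m < n)) hU
      have hder : ∀ x ∈ Set.Ico a b, derivWithin (dW a b m ψ) (Set.Icc a b) x = 0 := by
        intro x hx
        have hx' : x ∈ Set.Icc a b := Set.Ico_subset_Icc_self hx
        calc derivWithin (dW a b m ψ) (Set.Icc a b) x
            = dW a b (m+1) ψ x := (congrFun iteratedDerivWithin_succ x).symm
          _ = 0 := by rw [hm1]; exact hmem x hx'
      have hconst := constant_of_derivWithin_zero hdiff hder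
      have ha0 : dW a b m ψ a = 0 := by
        have h1 := hconst s₀ hs₀'
        have h0m : dW a b m ψ s₀ = 0 := h0 m (by omega)
        linarith
      calc dW a b m ψ s = dW a b m ψ a := hconst s hs
        _ = 0 := ha0
  intro s hs
  have h00 := key (n-2) le_rfl s hs
  rw [Nat.sub_self] at h00
  simpa [dW, iteratedDerivWithin_zero] using h00

lemma genSet_subset_range {n : ℕ} (hn : 3 ≤ n) (u v : ℝ → ℝ) :
    genSet n u v ⊆ Set.range (fun i : Fin n =>
      if (i:ℕ) = 0 then u else if (i:ℕ) = 1 then v else fun s : ℝ => s ^ ((i:ℕ) - 2)) := by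
  intro f hf
  rcases hf with rfl | rfl | ⟨i, hi, rfl⟩
  · exact ⟨⟨0, by omega⟩, by simp⟩
  · exact ⟨⟨1, by omega⟩, by simp⟩
  · refine ⟨⟨i + 2, by omega⟩, ?_⟩
    have h2 : i + 2 ≠ 0 := by omega
    have h3 : i + 2 ≠ 1 := by omega
    simp [h2, h3]

lemma Pspace_fd {n : ℕ} (hn : 3 ≤ n) (u v : ℝ → ℝ) :
    FiniteDimensional ℝ (Pspace n u v) :=
  FiniteDimensional.span_of_finite ℝ
    ((Set.finite_range _).subset (genSet_subset_range hn u v))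

lemma Pspace_finrank_le {n : ℕ} (hn : 3 ≤ n) (u v : ℝ → ℝ) :
    Module.finrank ℝ (Pspace n u v) ≤ n := by
  have h1 : Pspace n u v ≤ Submodule.span ℝ (Set.range (fun i : Fin n =>
      if (i:ℕ) = 0 then u else if (i:ℕ) = 1 then v else fun s : ℝ => s ^ ((i:ℕ) - 2))) :=
    Submodule.span_mono (genSet_subset_range hn u v)
  haveI : FiniteDimensional ℝ (Submodule.span ℝ (Set.range (fun i : Fin n =>
      if (i:ℕ) = 0 then u else if (i:ℕ) = 1 then v else fun s : ℝ => s ^ ((i:ℕ) - 2)))) :=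
    FiniteDimensional.span_of_finite ℝ (Set.finite_range _)
  calc Module.finrank ℝ (Pspace n u v)
      ≤ Module.finrank ℝ (Submodule.span ℝ (Set.range _)) := Submodule.finrank_mono h1
    _ ≤ Fintype.card (Fin n) := finrank_range_le_card _
    _ = n := Fintype.card_fin n

lemma Pspace_dual {n : ℕ} {u v : ℝ → ℝ} {a b : ℝ} (hn : 3 ≤ n) (hab : a < b)
    (hu : ContDiffOn ℝ n u (Set.Icc a b)) (hv : ContDiffOn ℝ n v (Set.Icc a b))
    (hdim : dimP n u v a b = n) (hC2 : CondC2 n u v a b)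
    {s₀ : ℝ} (hs₀ : s₀ ∈ Set.Ioo a b) :
    ∃ ψ : Fin n → ℝ → ℝ, (∀ i, ψ i ∈ Pspace n u v) ∧
      ∀ (i : Fin n) (k : ℕ), k < n →
        dW a b k (ψ i) s₀ = if k = (i:ℕ) then 1 else 0 := by
  haveI : FiniteDimensional ℝ (Pspace n u v) := Pspace_fd hn u v
  have hU := uniqueDiffOn_Icc hab
  have hs₀' : s₀ ∈ Set.Icc a b := Set.Ioo_subset_Icc_self hs₀
  -- restriction map is injective on Pspace
  set r : (Pspace n u v) →ₗ[ℝ] (Set.Icc a b → ℝ) := (restrictMap a b).domRestrict (Pspace n u v)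
    with hrdef
  have hrange : LinearMap.range r = (Pspace n u v).map (restrictMap a b) :=
    LinearMap.range_domRestrict _ _
  have hfr : Module.finrank ℝ (LinearMap.range r) = n := by
    rw [hrange]; exact hdim
  have hfrle : Module.finrank ℝ (Pspace n u v) ≤ n := Pspace_finrank_le hn u v
  have hrn := LinearMap.finrank_range_add_finrank_ker r
  have hker0 : Module.finrank ℝ (LinearMap.ker r) = 0 := by omega
  have hfrP : Module.finrank ℝ (Pspace n u v) = n := by omega
  have hrinj : Function.Injective r := by
    rw [← LinearMap.ker_eq_bot]
    exact Submodule.finrank_eq_zero.mp hker0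
  -- evaluation map
  have hsm : ∀ ψ : Pspace n u v, ContDiffOn ℝ n (ψ : ℝ → ℝ) (Set.Icc a b) :=
    fun ψ => Pspace_contDiffOn hu hv ψ.2
  set E : (Pspace n u v) →ₗ[ℝ] (Fin n → ℝ) :=
    { toFun := fun ψ => fun k => dW a b (k : ℕ) (ψ : ℝ → ℝ) s₀
      map_add' := by
        intro ψ φ
        funext k
        exact iteratedDerivWithin_add hs₀' hU
          (((hsm ψ).of_le (by exact_mod_cast k.isLt.le)).contDiffWithinAt hs₀')
          (((hsm φ).of_le (by exact_mod_cast k.isLt.le)).contDiffWithinAt hs₀')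
      map_smul' := by
        intro c ψ
        funext k
        exact iteratedDerivWithin_const_smul hs₀' hU c
          (((hsm ψ).of_le (by exact_mod_cast k.isLt.le)).contDiffWithinAt hs₀') } with hEdef
  have hEinj : Function.Injective E := by
    rw [← LinearMap.ker_eq_bot, LinearMap.ker_eq_bot']
    intro ψ hψ0
    have hvan : ∀ s ∈ Set.Icc a b, (ψ : ℝ → ℝ) s = 0 := by
      refine Pspace_vanish hn hab hu hv hC2 ψ.2 hs₀ ?_
      intro k hk
      have := congrFun hψ0 ⟨k, hk⟩
      simpa [hEdef] using this
    have h00 : r ψ = r 0 := by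
      rw [map_zero]
      funext x
      simp only [hrdef, LinearMap.domRestrict_apply, restrictMap, LinearMap.funLeft_apply,
        Pi.zero_apply]
      exact hvan x.1 x.2
    exact hrinj h00
  have hEsurj : Function.Surjective E := by
    have hfin : Module.finrank ℝ (Pspace n u v) = Module.finrank ℝ (Fin n → ℝ) := by
      rw [hfrP, Module.finrank_fin_fun]
    exact (LinearMap.injective_iff_surjective_of_finrank_eq_finrank hfin).mp hEinj
  -- dual basis
  choose Ψ hΨ using fun i : Fin n => hEsurj (Pi.single i 1)
  refine ⟨fun i => (Ψ i : ℝ → ℝ), fun i => (Ψ i).2, ?_⟩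
  intro i k hk
  have := congrFun (hΨ i) ⟨k, hk⟩
  simp only [hEdef, LinearMap.coe_mk, AddHom.coe_mk] at this
  rw [this]
  rw [Pi.single_apply]
  by_cases hik : k = (i : ℕ)
  · simp [hik, Fin.ext_iff]
  · have : (⟨k, hk⟩ : Fin n) ≠ i := by simp [Fin.ext_iff, hik]
    simp [this, hik]

lemma TP_rep {n₁ n₂ : ℕ} {u₁ v₁ u₂ v₂ : ℝ → ℝ} {W : ℝ → ℝ → ℝ}
    (hW : W ∈ TPspace n₁ n₂ u₁ v₁ u₂ v₂) :
    ∃ (m : ℕ) (g h : Fin m → ℝ → ℝ), (∀ k, g k ∈ Pspace n₁ u₁ v₁) ∧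
      (∀ k, h k ∈ Pspace n₂ u₂ v₂) ∧ ∀ s t, W s t = ∑ k, g k s * h k t := by
  induction hW using Submodule.span_induction with
  | mem x hx =>
    obtain ⟨g₁, hg₁, g₂, hg₂, rfl⟩ := hx
    exact ⟨1, fun _ => g₁, fun _ => g₂, fun _ => hg₁, fun _ => hg₂, by simp⟩
  | zero => exact ⟨0, fun _ => 0, fun _ => 0, fun k => k.elim0, fun k => k.elim0, by simp⟩
  | add x y hx hy ihx ihy =>
    obtain ⟨m, g, h, hg, hh, hrep⟩ := ihx
    obtain ⟨m', g', h', hg', hh', hrep'⟩ := ihy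
    refine ⟨m + m', Fin.append g g', Fin.append h h', ?_, ?_, ?_⟩
    · intro k
      refine Fin.addCases (fun i => ?_) (fun i => ?_) k
      · rw [Fin.append_left]; exact hg i
      · rw [Fin.append_right]; exact hg' i
    · intro k
      refine Fin.addCases (fun i => ?_) (fun i => ?_) k
      · rw [Fin.append_left]; exact hh i
      · rw [Fin.append_right]; exact hh' i
    · intro s t
      have : (x + y) s t = x s t + y s t := rfl
      rw [this, hrep s t, hrep' s t, Fin.sum_univ_add]
      simp [Fin.append_left, Fin.append_right]
  | smul c x hx ihx =>
    obtain ⟨m, g, h, hg, hh, hrep⟩ := ihx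
    refine ⟨m, fun k => c • g k, h, fun k => Submodule.smul_mem _ c (hg k), hh, ?_⟩
    intro s t
    have h1 : (c • x) s t = c * x s t := rfl
    rw [h1, hrep s t, Finset.mul_sum]
    exact Finset.sum_congr rfl fun k _ => by simp [mul_assoc]

lemma DmixW_rep {ι : Type*} [Fintype ι] {n₁ n₂ : ℕ} {a b c d : ℝ} (hab : a < b) (hcd : c < d)
    (g h : ι → ℝ → ℝ) (hg : ∀ k, ContDiffOn ℝ n₁ (g k) (Set.Icc a b))
    (hh : ∀ k, ContDiffOn ℝ n₂ (h k) (Set.Icc c d))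
    {W : ℝ → ℝ → ℝ} (hrep : ∀ s t, W s t = ∑ k, g k s * h k t)
    {i j : ℕ} (hi : i ≤ n₁) (hj : j ≤ n₂) {s t : ℝ}
    (hs : s ∈ Set.Icc a b) (ht : t ∈ Set.Icc c d) :
    DmixW a b c d i j W s t = ∑ k, dW a b i (g k) s * dW c d j (h k) t := by
  have hUc := uniqueDiffOn_Icc hcd
  have hUa := uniqueDiffOn_Icc hab
  have inner : ∀ x : ℝ, iteratedDerivWithin j (W x) (Set.Icc c d) t
      = ∑ k, g k x * dW c d j (h k) t := by
    intro x
    have hWx : W x = fun τ => ∑ k, g k x * h k τ := funext fun τ => hrep x τ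
    rw [hWx, iterDW_finsum (n := n₂) Finset.univ (fun k τ => g k x * h k τ) hj hcd
      (fun k _ => contDiffOn_const.mul (hh k)) ht]
    exact Finset.sum_congr rfl fun k _ =>
      iteratedDerivWithin_const_mul ht hUc (g k x) (((hh k).of_le (by exact_mod_cast hj)).contDiffWithinAt ht)
  have houter : (fun x => iteratedDerivWithin j (W x) (Set.Icc c d) t)
      = fun x => ∑ k, g k x * dW c d j (h k) t := funext inner
  show iteratedDerivWithin i _ (Set.Icc a b) s = _
  rw [houter, iterDW_finsum (n := n₁) Finset.univ
    (fun k x => g k x * dW c d j (h k) t) hi hab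
    (fun k _ => (hg k).mul contDiffOn_const) hs]
  refine Finset.sum_congr rfl fun k _ => ?_
  have h1 : (fun x => g k x * dW c d j (h k) t) = fun x => dW c d j (h k) t * g k x := by
    funext x; ring
  rw [h1, iteratedDerivWithin_const_mul hs hUa _ (((hg k).of_le (by exact_mod_cast hi)).contDiffWithinAt hs)]
  exact mul_comm _ _

lemma dW_sum_mul_const {ι : Type*} [Fintype ι] {n : ℕ} {a b : ℝ} (hab : a < b)
    (G : ι → ℝ → ℝ) (C : ι → ℝ) (hG : ∀ k, ContDiffOn ℝ n (G k) (Set.Icc a b))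
    {i : ℕ} (hi : i ≤ n) {x : ℝ} (hx : x ∈ Set.Icc a b) :
    dW a b i (fun s => ∑ k, G k s * C k) x = ∑ k, dW a b i (G k) x * C k := by
  have hUa := uniqueDiffOn_Icc hab
  show iteratedDerivWithin i _ _ _ = _
  rw [iterDW_finsum (n := n) Finset.univ (fun k s => G k s * C k) hi hab
    (fun k _ => (hG k).mul contDiffOn_const) hx]
  refine Finset.sum_congr rfl fun k _ => ?_
  have h1 : (fun s => G k s * C k) = fun s => C k * G k s := by funext s; ring
  rw [h1, iteratedDerivWithin_const_mul hx hUa _ (((hG k).of_le (by exact_mod_cast hi)).contDiffWithinAt hx)]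
  exact mul_comm _ _

lemma dW_sum_const_mul {ι : Type*} [Fintype ι] {n : ℕ} {a b : ℝ} (hab : a < b)
    (H : ι → ℝ → ℝ) (C : ι → ℝ) (hH : ∀ k, ContDiffOn ℝ n (H k) (Set.Icc a b))
    {i : ℕ} (hi : i ≤ n) {x : ℝ} (hx : x ∈ Set.Icc a b) :
    dW a b i (fun s => ∑ k, C k * H k s) x = ∑ k, C k * dW a b i (H k) x := by
  have hUa := uniqueDiffOn_Icc hab
  show iteratedDerivWithin i _ _ _ = _
  rw [iterDW_finsum (n := n) Finset.univ (fun k s => C k * H k s) hi hab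
    (fun k _ => contDiffOn_const.mul (hH k)) hx]
  exact Finset.sum_congr rfl fun k _ =>
    iteratedDerivWithin_const_mul hx hUa _ (((hH k).of_le (by exact_mod_cast hi)).contDiffWithinAt hx)

lemma sum_mul_const_mem {ι : Type*} [Fintype ι] {n : ℕ} {u v : ℝ → ℝ}
    (G : ι → ℝ → ℝ) (C : ι → ℝ) (hG : ∀ k, G k ∈ Pspace n u v) :
    (fun s => ∑ k, G k s * C k) ∈ Pspace n u v := by
  have h1 : (fun s => ∑ k, G k s * C k) = ∑ k, C k • G k := by
    funext s
    rw [Finset.sum_apply]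
    exact Finset.sum_congr rfl fun k _ => by simp [mul_comm]
  rw [h1]
  exact Submodule.sum_mem _ fun k _ => Submodule.smul_mem _ _ (hG k)

lemma sum_const_mul_mem {ι : Type*} [Fintype ι] {n : ℕ} {u v : ℝ → ℝ}
    (H : ι → ℝ → ℝ) (C : ι → ℝ) (hH : ∀ k, H k ∈ Pspace n u v) :
    (fun t => ∑ k, C k * H k t) ∈ Pspace n u v := by
  have h1 : (fun t => ∑ k, C k * H k t) = ∑ k, C k • H k := by
    funext t
    rw [Finset.sum_apply]
    exact Finset.sum_congr rfl fun k _ => by simp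
  rw [h1]
  exact Submodule.sum_mem _ fun k _ => Submodule.smul_mem _ _ (hH k)

/-- Bivariate tensor-product Hermite interpolation: under (C1), (C2)
and the dimension assumptions on both univariate spaces, for every sufficiently smooth
`f` on `R = [a,b] × [c,d]` and every interior point `(s₀,t₀)` there is a unique
`Q ∈ P^{(n₁,n₂)}_{u,v}(R)` with `D_s^i D_t^j Q(s₀,t₀) = D_s^i D_t^j f(s₀,t₀)` for all
`0 ≤ i ≤ n₁−1`, `0 ≤ j ≤ n₂−1`. -/
theorem statement16 (n₁ n₂ : ℕ) (hn₁ : 3 ≤ n₁) (hn₂ : 3 ≤ n₂)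
    (a b c d : ℝ) (hab : a < b) (hcd : c < d) (u₁ v₁ u₂ v₂ : ℝ → ℝ)
    (hu₁ : ContDiffOn ℝ n₁ u₁ (Set.Icc a b)) (hv₁ : ContDiffOn ℝ n₁ v₁ (Set.Icc a b))
    (hu₂ : ContDiffOn ℝ n₂ u₂ (Set.Icc c d)) (hv₂ : ContDiffOn ℝ n₂ v₂ (Set.Icc c d))
    (hdim₁ : dimP n₁ u₁ v₁ a b = n₁) (hdim₂ : dimP n₂ u₂ v₂ c d = n₂)
    (hC1₁ : CondC1 n₁ u₁ v₁ a b) (hC2₁ : CondC2 n₁ u₁ v₁ a b)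
    (hC1₂ : CondC1 n₂ u₂ v₂ c d) (hC2₂ : CondC2 n₂ u₂ v₂ c d)
    (f : ℝ → ℝ → ℝ)
    (hf₁ : ∀ s ∈ Set.Icc a b, ContDiffOn ℝ n₂ (f s) (Set.Icc c d))
    (hf₂ : ∀ j ≤ n₂, ∀ t ∈ Set.Icc c d,
      ContDiffOn ℝ n₁ (fun s => iteratedDerivWithin j (f s) (Set.Icc c d) t) (Set.Icc a b))
    (hf₃ : ∀ i ≤ n₁, ∀ j ≤ n₂,
      ContinuousOn (fun p : ℝ × ℝ => DmixW a b c d i j f p.1 p.2)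
        (Set.Icc a b ×ˢ Set.Icc c d)) :
    ∀ s₀ ∈ Set.Ioo a b, ∀ t₀ ∈ Set.Ioo c d,
      ∃ Q ∈ TPspace n₁ n₂ u₁ v₁ u₂ v₂,
        (∀ i < n₁, ∀ j < n₂, DmixW a b c d i j Q s₀ t₀ = DmixW a b c d i j f s₀ t₀) ∧
        (∀ W ∈ TPspace n₁ n₂ u₁ v₁ u₂ v₂,
          (∀ i < n₁, ∀ j < n₂, DmixW a b c d i j W s₀ t₀ = DmixW a b c d i j f s₀ t₀) →
          ∀ s ∈ Set.Icc a b, ∀ t ∈ Set.Icc c d, W s t = Q s t) := by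
  intro s₀ hs₀ t₀ ht₀
  have hU1 := uniqueDiffOn_Icc hab
  have hU2 := uniqueDiffOn_Icc hcd
  have hs₀' : s₀ ∈ Set.Icc a b := Set.Ioo_subset_Icc_self hs₀
  have ht₀' : t₀ ∈ Set.Icc c d := Set.Ioo_subset_Icc_self ht₀
  obtain ⟨ψ, hψmem, hψdual⟩ := Pspace_dual hn₁ hab hu₁ hv₁ hdim₁ hC2₁ hs₀
  obtain ⟨φ, hφmem, hφdual⟩ := Pspace_dual hn₂ hcd hu₂ hv₂ hdim₂ hC2₂ ht₀
  have hψsm : ∀ i, ContDiffOn ℝ n₁ (ψ i) (Set.Icc a b) :=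
    fun i => Pspace_contDiffOn hu₁ hv₁ (hψmem i)
  have hφsm : ∀ j, ContDiffOn ℝ n₂ (φ j) (Set.Icc c d) :=
    fun j => Pspace_contDiffOn hu₂ hv₂ (hφmem j)
  set co : Fin n₁ → Fin n₂ → ℝ :=
    fun p q => DmixW a b c d (p : ℕ) (q : ℕ) f s₀ t₀ with hco
  set G : Fin n₁ × Fin n₂ → ℝ → ℝ := fun p => fun s => co p.1 p.2 * ψ p.1 s with hG
  set H : Fin n₁ × Fin n₂ → ℝ → ℝ := fun p => φ p.2 with hH
  set Q : ℝ → ℝ → ℝ := fun s t => ∑ p : Fin n₁ × Fin n₂, G p s * H p t with hQ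
  have hGsm : ∀ p, ContDiffOn ℝ n₁ (G p) (Set.Icc a b) :=
    fun p => contDiffOn_const.mul (hψsm p.1)
  have hHsm : ∀ p, ContDiffOn ℝ n₂ (H p) (Set.Icc c d) := fun p => hφsm p.2
  have hGmem : ∀ p, G p ∈ Pspace n₁ u₁ v₁ := by
    intro p
    have : G p = co p.1 p.2 • ψ p.1 := by funext s; simp [hG]
    rw [this]; exact Submodule.smul_mem _ _ (hψmem p.1)
  have hQmem : Q ∈ TPspace n₁ n₂ u₁ v₁ u₂ v₂ := by
    have hQeq : Q = ∑ p : Fin n₁ × Fin n₂,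
        (co p.1 p.2) • (fun s t => ψ p.1 s * φ p.2 t) := by
      funext s t
      rw [hQ]
      simp only [Finset.sum_apply, Pi.smul_apply, smul_eq_mul]
      exact Finset.sum_congr rfl fun p _ => by simp [hG, hH, mul_assoc]
    rw [hQeq]
    exact Submodule.sum_mem _ fun p _ => Submodule.smul_mem _ _
      (Submodule.subset_span ⟨ψ p.1, hψmem p.1, φ p.2, hφmem p.2, rfl⟩)
  -- derivative values of Q
  have hQder : ∀ i < n₁, ∀ j < n₂, DmixW a b c d i j Q s₀ t₀ = DmixW a b c d i j f s₀ t₀ := by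
    intro i hi j hj
    have hrep := DmixW_rep hab hcd G H hGsm hHsm (fun s t => rfl) hi.le hj.le hs₀' ht₀'
    rw [hrep]
    have hterm : ∀ p : Fin n₁ × Fin n₂,
        dW a b i (G p) s₀ * dW c d j (H p) t₀
          = co p.1 p.2 * (if i = (p.1 : ℕ) then 1 else 0) * (if j = (p.2 : ℕ) then 1 else 0) := by
      intro p
      have h1 : dW a b i (G p) s₀ = co p.1 p.2 * dW a b i (ψ p.1) s₀ := by
        show iteratedDerivWithin i _ _ _ = _
        exact iteratedDerivWithin_const_mul hs₀' hU1 _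
          (((hψsm p.1).of_le (by exact_mod_cast hi.le)).contDiffWithinAt hs₀')
      rw [h1, hψdual p.1 i hi, hφdual p.2 j hj]
    rw [Finset.sum_congr rfl fun p _ => hterm p]
    rw [Finset.sum_eq_single_of_mem ((⟨i, hi⟩ : Fin n₁), (⟨j, hj⟩ : Fin n₂))
      (Finset.mem_univ _)]
    · simp [hco]
    · intro p _ hp
      rcases Prod.mk.injEq .. ▸ (fun h => hp h) with _
      by_cases h1 : i = (p.1 : ℕ)
      · have h2 : ¬ j = (p.2 : ℕ) := by
          intro h2
          apply hp
          ext
          · simp [← h1]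
          · simp [← h2]
        simp [h2]
      · simp [h1]
  refine ⟨Q, hQmem, hQder, ?_⟩
  -- uniqueness
  intro W hW hWder s hs t ht
  obtain ⟨m, gW, hWfun, hgW, hhW, hrepW⟩ := TP_rep hW
  set ι := Sum (Fin m) (Fin n₁ × Fin n₂) with hι
  set G' : ι → ℝ → ℝ := Sum.elim gW (fun p => fun x => -(G p x)) with hG'
  set H' : ι → ℝ → ℝ := Sum.elim hWfun H with hH'
  have hG'sm : ∀ k, ContDiffOn ℝ n₁ (G' k) (Set.Icc a b) := by
    rintro (k | p)
    · exact Pspace_contDiffOn hu₁ hv₁ (hgW k)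
    · exact (hGsm p).neg
  have hH'sm : ∀ k, ContDiffOn ℝ n₂ (H' k) (Set.Icc c d) := by
    rintro (k | p)
    · exact Pspace_contDiffOn hu₂ hv₂ (hhW k)
    · exact hHsm p
  have hG'mem : ∀ k, G' k ∈ Pspace n₁ u₁ v₁ := by
    rintro (k | p)
    · exact hgW k
    · have : (fun x => -(G p x)) = (-1 : ℝ) • G p := by funext x; simp
      show (fun x => -(G p x)) ∈ _
      rw [this]; exact Submodule.smul_mem _ _ (hGmem p)
  have hH'mem : ∀ k, H' k ∈ Pspace n₂ u₂ v₂ := by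
    rintro (k | p)
    · exact hhW k
    · exact hφmem p.2
  have hDrep : ∀ x τ, W x τ - Q x τ = ∑ k : ι, G' k x * H' k τ := by
    intro x τ
    rw [Fintype.sum_sum_type]
    simp only [hG', hH', Sum.elim_inl, Sum.elim_inr]
    rw [hrepW x τ]
    have : ∑ p : Fin n₁ × Fin n₂, (-(G p x)) * H p τ = -Q x τ := by
      rw [hQ, ← Finset.sum_neg_distrib]
      exact Finset.sum_congr rfl fun p _ => by ring
    rw [this]
    ring
  -- the key vanishing of derivative sums
  have hzero : ∀ i < n₁, ∀ j < n₂,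
      ∑ k : ι, dW a b i (G' k) s₀ * dW c d j (H' k) t₀ = 0 := by
    intro i hi j hj
    rw [Fintype.sum_sum_type]
    simp only [hG', hH', Sum.elim_inl, Sum.elim_inr]
    have hWsum : ∑ k : Fin m, dW a b i (gW k) s₀ * dW c d j (hWfun k) t₀
        = DmixW a b c d i j W s₀ t₀ :=
      (DmixW_rep hab hcd gW hWfun (fun k => Pspace_contDiffOn hu₁ hv₁ (hgW k))
        (fun k => Pspace_contDiffOn hu₂ hv₂ (hhW k)) hrepW hi.le hj.le hs₀' ht₀').symm
    have hQsum : ∑ p : Fin n₁ × Fin n₂, dW a b i (G p) s₀ * dW c d j (H p) t₀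
        = DmixW a b c d i j Q s₀ t₀ :=
      (DmixW_rep hab hcd G H hGsm hHsm (fun s t => rfl) hi.le hj.le hs₀' ht₀').symm
    have hneg : ∀ p : Fin n₁ × Fin n₂,
        dW a b i (fun x => -(G p x)) s₀ = -(dW a b i (G p) s₀) :=
      fun p => iteratedDerivWithin_fun_neg (G p)
    have h2 : ∑ p : Fin n₁ × Fin n₂, dW a b i (fun x => -(G p x)) s₀ * dW c d j (H p) t₀
        = -DmixW a b c d i j Q s₀ t₀ := by
      rw [← hQsum, ← Finset.sum_neg_distrib]
      exact Finset.sum_congr rfl fun p _ => by rw [hneg p]; ring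
    rw [hWsum, h2, hWder i hi j hj, hQder i hi j hj]
    ring
  -- first vanish in s
  have hΦ : ∀ j < n₂, ∀ x ∈ Set.Icc a b,
      ∑ k : ι, G' k x * dW c d j (H' k) t₀ = 0 := by
    intro j hj
    have hΦmem : (fun x => ∑ k : ι, G' k x * dW c d j (H' k) t₀) ∈ Pspace n₁ u₁ v₁ :=
      sum_mul_const_mem G' _ hG'mem
    have hvan := Pspace_vanish hn₁ hab hu₁ hv₁ hC2₁ hΦmem hs₀ ?_
    · exact fun x hx => hvan x hx
    · intro i hi
      rw [dW_sum_mul_const hab G' _ hG'sm hi.le hs₀']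
      exact hzero i hi j hj
  -- then vanish in t
  have hΨ : ∀ τ ∈ Set.Icc c d, ∑ k : ι, G' k s * H' k τ = 0 := by
    have hΨmem : (fun τ => ∑ k : ι, G' k s * H' k τ) ∈ Pspace n₂ u₂ v₂ :=
      sum_const_mul_mem H' _ hH'mem
    have hvan := Pspace_vanish hn₂ hcd hu₂ hv₂ hC2₂ hΨmem ht₀ ?_
    · exact fun τ hτ => hvan τ hτ
    · intro j hj
      rw [dW_sum_const_mul hcd H' _ hH'sm hj.le ht₀']
      exact hΦ j hj s hs
  have := hΨ t ht
  rw [← hDrep s t] at this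
  linarith
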